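/- Suppose in addition that A and D are invertible in Mat_N(𝒜). Then the pair A′ := D, D′ := D A^{−1} D^{−1} again satisfies the defining relations of the quantized loop edge algebra: R₂₁ A′₁ R A′₂ = A′₂ R₂₁ A′₁ R; R₂₁ D′₁ R D′₂ = D′₂ R₂₁ D′₁ R; and R₂₁ D′₁ R A′₂ = A′₂ R₂₁ D′₁ R₂₁^{−1}. (This is the content of the q-Fourier transform ℱ: 𝒟_q(e)° → 𝒟_q(e)°, A ↦ D, D ↦ D A^{−1} D^{−1}, for a loop edge.) -/

import Mathlib

open Matrix Kronecker

section Abstract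
variable {M : Type*} [Monoid M]

private lemma conj_move {x y z zi : M} (h : x * z = z * y)
    (h1 : z * zi = 1) (h2 : zi * z = 1) : zi * x = y * zi := by
  have h' := congrArg (fun w => zi * w * zi) h
  simp only [mul_assoc] at h'
  rw [h1, mul_one] at h'
  rw [← mul_assoc zi z, h2, one_mul] at h'
  exact h'

private lemma inv_conj {x y z xi yi : M} (h : x * z = z * y)
    (hx2 : xi * x = 1) (hy1 : y * yi = 1) : xi * z = z * yi := by
  have h' := congrArg (fun w => xi * w * yi) h
  simp only [mul_assoc] at h'
  rw [hy1, mul_one] at h'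
  rw [← mul_assoc xi x, hx2, one_mul] at h'
  exact h'.symm

theorem loop_fourier_abstract
    (r ri s si a ai b bi d di e ei : M)
    (hr1 : r * ri = 1) (hr2 : ri * r = 1)
    (hs1 : s * si = 1) (hs2 : si * s = 1)
    (ha1 : a * ai = 1) (ha2 : ai * a = 1)
    (hb1 : b * bi = 1) (hb2 : bi * b = 1)
    (hd1 : d * di = 1) (hd2 : di * d = 1)
    (he1 : e * ei = 1) (he2 : ei * e = 1)
    (c1 : s * (a * (r * b)) = b * (s * (a * r)))
    (c2 : s * (d * (r * e)) = e * (s * (d * r)))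
    (c3 : s * (d * (r * b)) = b * (s * (d * si)))
    (f1 : r * (b * (s * a)) = a * (r * (b * s)))
    (f2 : r * (e * (s * d)) = d * (r * (e * s)))
    (f3 : r * (e * (s * a)) = a * (r * (e * ri))) :
    s * (d * (ai * (di * (r * e)))) = e * (s * (d * (ai * (di * si))))
    ∧ s * (d * (ai * (di * (r * (e * (bi * ei))))))
        = e * (bi * (ei * (s * (d * (ai * (di * r)))))) := by
  -- cancellation helpers
  have K1 : ∀ t : M, r * (ri * t) = t := fun t => by rw [← mul_assoc, hr1, one_mul]
  have K2 : ∀ t : M, ri * (r * t) = t := fun t => by rw [← mul_assoc, hr2, one_mul]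
  have K3 : ∀ t : M, s * (si * t) = t := fun t => by rw [← mul_assoc, hs1, one_mul]
  have K4 : ∀ t : M, si * (s * t) = t := fun t => by rw [← mul_assoc, hs2, one_mul]
  have K5 : ∀ t : M, a * (ai * t) = t := fun t => by rw [← mul_assoc, ha1, one_mul]
  have K6 : ∀ t : M, ai * (a * t) = t := fun t => by rw [← mul_assoc, ha2, one_mul]
  have K7 : ∀ t : M, b * (bi * t) = t := fun t => by rw [← mul_assoc, hb1, one_mul]
  have K8 : ∀ t : M, bi * (b * t) = t := fun t => by rw [← mul_assoc, hb2, one_mul]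
  have K9 : ∀ t : M, d * (di * t) = t := fun t => by rw [← mul_assoc, hd1, one_mul]
  have K10 : ∀ t : M, di * (d * t) = t := fun t => by rw [← mul_assoc, hd2, one_mul]
  have K11 : ∀ t : M, e * (ei * t) = t := fun t => by rw [← mul_assoc, he1, one_mul]
  have K12 : ∀ t : M, ei * (e * t) = t := fun t => by rw [← mul_assoc, he2, one_mul]
  -- parametric base relations
  have c1p : ∀ t : M, s * (a * (r * (b * t))) = b * (s * (a * (r * t))) :=
    fun t => by simpa [mul_assoc] using congrArg (· * t) c1
  have c2p : ∀ t : M, s * (d * (r * (e * t))) = e * (s * (d * (r * t))) :=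
    fun t => by simpa [mul_assoc] using congrArg (· * t) c2
  have c3p : ∀ t : M, s * (d * (r * (b * t))) = b * (s * (d * (si * t))) :=
    fun t => by simpa [mul_assoc] using congrArg (· * t) c3
  have f1p : ∀ t : M, r * (b * (s * (a * t))) = a * (r * (b * (s * t))) :=
    fun t => by simpa [mul_assoc] using congrArg (· * t) f1
  have f2p : ∀ t : M, r * (e * (s * (d * t))) = d * (r * (e * (s * t))) :=
    fun t => by simpa [mul_assoc] using congrArg (· * t) f2
  have f3p : ∀ t : M, r * (e * (s * (a * t))) = a * (r * (e * (ri * t))) :=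
    fun t => by simpa [mul_assoc] using congrArg (· * t) f3
  -- element-level facts
  have E_c1 : (s * a * r) * b = b * (s * a * r) := by
    simpa [mul_assoc] using c1
  have E_c2 : (s * d * r) * e = e * (s * d * r) := by
    simpa [mul_assoc] using c2
  have E_c3 : (s * d * r) * b = b * (s * d * si) := by
    simpa [mul_assoc] using c3
  have E_f2 : (r * e * s) * d = d * (r * e * s) := by
    simpa [mul_assoc] using f2
  have E_f3 : (r * e * s) * a = a * (r * e * ri) := by
    simpa [mul_assoc] using f3
  -- inverse facts for triple products
  have hsdr2 : (ri * di * si) * (s * d * r) = 1 := by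
    simp [mul_assoc, K4, K10, hr2]
  have hsdsi1 : (s * d * si) * (s * di * si) = 1 := by
    simp [mul_assoc, K4, K9, hs1]
  have hsar2 : (ri * ai * si) * (s * a * r) = 1 := by
    simp [mul_assoc, K4, K6, hr2]
  have hsar1 : (s * a * r) * (ri * ai * si) = 1 := by
    simp [mul_assoc, K1, K5, hs1]
  have hres2 : (si * ei * ri) * (r * e * s) = 1 := by
    simp [mul_assoc, K2, K12, hs2]
  have hreri1 : (r * e * ri) * (r * ei * ri) = 1 := by
    simp [mul_assoc, K2, K11, hr1]
  -- derived element facts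
  have E1 : (r * e * s) * di = di * (r * e * s) :=
    (conj_move E_f2 hd1 hd2).symm
  have E2 : ai * (r * e * s) = (r * e * ri) * ai :=
    conj_move E_f3 ha1 ha2
  have E11a : (ri * di * si) * b = b * (s * di * si) :=
    inv_conj E_c3 hsdr2 hsdsi1
  have E11 : bi * (ri * di * si) = (s * di * si) * bi :=
    conj_move E11a hb1 hb2
  have E12a : (ri * di * si) * e = e * (ri * di * si) :=
    inv_conj E_c2 hsdr2 (by simp [mul_assoc, K1, K9, hs1])
  have E12 : (ri * di * si) * ei = ei * (ri * di * si) :=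
    (conj_move E12a he1 he2).symm
  have E13a : (ri * ai * si) * b = b * (ri * ai * si) :=
    inv_conj E_c1 hsar2 hsar1
  have E13 : (ri * ai * si) * bi = bi * (ri * ai * si) :=
    (conj_move E13a hb1 hb2).symm
  have E14a : (si * ei * ri) * a = a * (r * ei * ri) :=
    inv_conj E_f3 hres2 hreri1
  have E14 : ai * (si * ei * ri) = (r * ei * ri) * ai :=
    conj_move E14a ha1 ha2
  have E15 : ei * (s * d * r) = (s * d * r) * ei :=
    conj_move E_c2 he1 he2
  have E16 : bi * (s * d * r) = (s * d * si) * bi :=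
    conj_move E_c3 hb1 hb2
  -- derived parametric relations
  have D1p : ∀ t : M, r * (e * (s * (di * t))) = di * (r * (e * (s * t))) :=
    fun t => by simpa [mul_assoc] using congrArg (· * t) E1
  have D2p : ∀ t : M, ai * (r * (e * (s * t))) = r * (e * (ri * (ai * t))) :=
    fun t => by simpa [mul_assoc] using congrArg (· * t) E2
  have rel3p : ∀ t : M, b * (s * (d * t)) = s * (d * (r * (b * (s * t)))) :=
    fun t => by
      have h := congrArg (fun w => w * (s * t)) E_c3
      simp only [mul_assoc] at h
      rw [K4] at h
      exact h.symm
  have rel7p : ∀ t : M, a * (r * (e * t)) = r * (e * (s * (a * (r * t)))) :=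
    fun t => by
      have h := congrArg (fun w => w * (r * t)) E_f3
      simp only [mul_assoc] at h
      rw [K2] at h
      exact h.symm
  have rel10p : ∀ t : M, d * (r * (b * t)) = si * (b * (s * (d * (si * t)))) :=
    fun t => by
      have h := congrArg (fun w => si * (w * t)) E_c3
      simp only [mul_assoc] at h
      rw [K4] at h
      exact h
  have rel11p : ∀ t : M, di * (si * (bi * t)) = si * (bi * (ri * (di * (si * t)))) :=
    fun t => by
      have h := congrArg (fun w => si * (w * t)) E11
      simp only [mul_assoc] at h
      rw [K4] at h
      exact h.symm
  have rel12p : ∀ t : M, ri * (di * (si * (ei * t))) = ei * (ri * (di * (si * t))) :=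
    fun t => by simpa [mul_assoc] using congrArg (· * t) E12
  have rel13p : ∀ t : M, ai * (si * (bi * t)) = r * (bi * (ri * (ai * (si * t)))) :=
    fun t => by
      have h := congrArg (fun w => r * (w * t)) E13
      simp only [mul_assoc] at h
      rw [K1] at h
      exact h
  have rel14p : ∀ t : M, ai * (si * (ei * t)) = r * (ei * (ri * (ai * (r * t)))) :=
    fun t => by
      have h := congrArg (fun w => w * (r * t)) E14
      simp only [mul_assoc] at h
      rw [K2] at h
      exact h
  have rel15p : ∀ t : M, ei * (s * (d * t)) = s * (d * (r * (ei * (ri * t)))) :=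
    fun t => by
      have h := congrArg (fun w => w * (ri * t)) E15
      simp only [mul_assoc] at h
      rw [K1] at h
      exact h
  have rel16p : ∀ t : M, bi * (s * (d * (r * t))) = s * (d * (si * (bi * t))) :=
    fun t => by simpa [mul_assoc] using congrArg (· * t) E16
  -- Step A  (L3')
  have StepA : ∀ t : M,
      s * (d * (ai * (di * (r * (e * (s * t)))))) = e * (s * (d * (ai * (di * t)))) := by
    intro t
    conv_lhs =>
      rw [← D1p]
      rw [D2p]
      rw [c2p]
      rw [K1]
  -- Step B
  have StepB : ∀ t : M,
      e * (b * (s * (d * (a * (r * t))))) = s * (d * (a * (r * (e * (b * t))))) := by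
    intro t
    conv_lhs =>
      rw [rel3p]
      rw [← c1p]
      rw [← c2p]
      rw [f3p]
      rw [K2]
  -- Step C
  have StepC : ∀ t : M,
      d * (a * (r * (e * (b * (s * (r * t)))))) = r * (s * (d * (a * (r * (e * (b * t)))))) := by
    intro t
    conv_lhs =>
      rw [rel7p]
      rw [← f2p]
      rw [← f1p]
      rw [rel10p]
      rw [K3]
      rw [K4]
      rw [StepB]
  have hE1 : ∀ t : M,
      d * (a * (r * (e * (b * (s * (r * (bi * (ei * (ri * (ai * (di * t))))))))))) = r * (s * t) :=
    fun t => by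
      have h := StepC (bi * (ei * (ri * (ai * (di * t)))))
      rw [K7, K11, K1, K5, K9] at h
      exact h
  have hSRW : ∀ t : M,
      s * (r * (bi * (ei * (ri * (ai * (di * t)))))) =
        bi * (ei * (ri * (ai * (di * (r * (s * t)))))) :=
    fun t => by
      have h := congrArg (fun w => bi * (ei * (ri * (ai * (di * w))))) (hE1 t)
      rw [K10, K6, K2, K12, K8] at h
      exact h
  have hRWsi : ∀ t : M,
      r * (bi * (ei * (ri * (ai * (di * (si * t)))))) =
        si * (bi * (ei * (ri * (ai * (di * (r * t)))))) :=
    fun t => by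
      have h := congrArg (fun w => si * w) (hSRW (si * t))
      rw [K3, K4] at h
      exact h
  -- Step T  (dagger)
  have StepT : ∀ t : M,
      s * (d * (ai * (di * (si * (bi * (ei * t)))))) =
        bi * (ei * (s * (d * (ai * (di * (r * t)))))) := by
    intro t
    conv_lhs =>
      rw [rel11p]
      rw [rel12p]
      rw [rel13p]
      rw [rel14p]
      rw [K2]
      rw [K1]
      rw [hRWsi]
    conv_rhs =>
      rw [rel15p]
      rw [rel16p]
  -- out2 parametric
  have out2p : ∀ t : M,
      s * (d * (ai * (di * (r * (e * (bi * (ei * t))))))) =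
        e * (bi * (ei * (s * (d * (ai * (di * (r * t))))))) := by
    intro t
    conv_lhs =>
      rw [← K3 (bi * (ei * t))]
      rw [StepA]
      rw [StepT]
  constructor
  · have h := StepA si
    rw [hs1, mul_one] at h
    exact h
  · have h := out2p 1
    simpa using h
end Abstract


noncomputable section

/-- Coefficient matrix of the R-matrix `R[N]` on `k^N ⊗ k^N`: the entry in
row `(i,j)`, column `(s,t)` is `q^{δ_{ij}} δ_{is} δ_{jt} + (q-q⁻¹) θ(i-j) δ_{it} δ_{js}`,
where `θ(x) = 1` if `x > 0` and `0` otherwise. -/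
def Rmat (k : Type) [Field k] (q : k) (N : ℕ) :
    Matrix (Fin N × Fin N) (Fin N × Fin N) k :=
  Matrix.of fun p r =>
    (if p.1 = p.2 then q else 1) * (if p = r then 1 else 0)
      + (q - q⁻¹) * ((if p.2 < p.1 then (1 : k) else 0) *
          (if p.1 = r.2 ∧ p.2 = r.1 then 1 else 0))

/-- The explicit inverse of `R[N]`:
`(R⁻¹)^{ij}_{st} = q^{-δ_{ij}} δ_{is} δ_{jt} - (q-q⁻¹) θ(i-j) δ_{it} δ_{js}`. -/
def RmatInv (k : Type) [Field k] (q : k) (N : ℕ) :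
    Matrix (Fin N × Fin N) (Fin N × Fin N) k :=
  Matrix.of fun p r =>
    (if p.1 = p.2 then q⁻¹ else 1) * (if p = r then 1 else 0)
      - (q - q⁻¹) * ((if p.2 < p.1 then (1 : k) else 0) *
          (if p.1 = r.2 ∧ p.2 = r.1 then 1 else 0))

variable (k : Type) [Field k] (𝒜 : Type) [Ring 𝒜] [Algebra k 𝒜]

/-- `R[N]` regarded as a matrix over the `k`-algebra `𝒜`. -/
def RA (q : k) (N : ℕ) : Matrix (Fin N × Fin N) (Fin N × Fin N) 𝒜 :=
  (Rmat k q N).map (algebraMap k 𝒜)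

/-- `R[N]₂₁ := τ ∘ R[N] ∘ τ` regarded as a matrix over `𝒜`. -/
def RA21 (q : k) (N : ℕ) : Matrix (Fin N × Fin N) (Fin N × Fin N) 𝒜 :=
  Matrix.of fun p r => RA k 𝒜 q N (p.2, p.1) (r.2, r.1)

/-- `(R[N])⁻¹` regarded as a matrix over `𝒜`. -/
def RAinv (q : k) (N : ℕ) : Matrix (Fin N × Fin N) (Fin N × Fin N) 𝒜 :=
  (RmatInv k q N).map (algebraMap k 𝒜)

/-- `(R[N]₂₁)⁻¹ = (R[N]⁻¹)₂₁` regarded as a matrix over `𝒜`. -/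
def RAinv21 (q : k) (N : ℕ) : Matrix (Fin N × Fin N) (Fin N × Fin N) 𝒜 :=
  Matrix.of fun p r => RAinv k 𝒜 q N (p.2, p.1) (r.2, r.1)

/-- The flip `τ : k^m ⊗ k^n → k^n ⊗ k^m` as a matrix over `𝒜`. -/
def flipA (m n : ℕ) : Matrix (Fin n × Fin m) (Fin m × Fin n) 𝒜 :=
  Matrix.of fun p r => if p.1 = r.2 ∧ p.2 = r.1 then 1 else 0


section RmatInverse

lemma Rmat_mul_RmatInv (k : Type) [Field k] (q : k) (hq : q ≠ 0) (N : ℕ) :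
    Rmat k q N * RmatInv k q N = 1 := by
  ext ⟨i,j⟩ ⟨s,t⟩
  simp only [Rmat, RmatInv, Matrix.mul_apply, Matrix.one_apply, Matrix.of_apply,
    Fintype.sum_prod_type, Prod.mk.injEq, add_mul, mul_sub, sub_mul, mul_add,
    ite_mul, mul_ite, one_mul, mul_one, zero_mul, mul_zero, ite_and]
  simp only [Finset.sum_sub_distrib, Finset.sum_add_distrib, Finset.sum_ite_eq,
    Finset.sum_ite_eq', Finset.mem_univ, if_true, Finset.sum_ite_irrel,
    Finset.sum_const_zero]
  split_ifs <;> first | omega | (simp_all; try field_simp; try ring)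

lemma RmatInv_mul_Rmat (k : Type) [Field k] (q : k) (hq : q ≠ 0) (N : ℕ) :
    RmatInv k q N * Rmat k q N = 1 := by
  ext ⟨i,j⟩ ⟨s,t⟩
  simp only [Rmat, RmatInv, Matrix.mul_apply, Matrix.one_apply, Matrix.of_apply,
    Fintype.sum_prod_type, Prod.mk.injEq, add_mul, mul_sub, sub_mul, mul_add,
    ite_mul, mul_ite, one_mul, mul_one, zero_mul, mul_zero, ite_and]
  simp only [Finset.sum_sub_distrib, Finset.sum_add_distrib, Finset.sum_ite_eq,
    Finset.sum_ite_eq', Finset.mem_univ, if_true, Finset.sum_ite_irrel,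
    Finset.sum_const_zero]
  split_ifs <;> first | omega | (simp_all; try field_simp; try ring)

end RmatInverse

section SwapMachinery

/-- Conjugation by the flip, implemented as reindexing along `Prod.swap`. -/
def swpM {N : ℕ} (X : Matrix (Fin N × Fin N) (Fin N × Fin N) 𝒜) :
    Matrix (Fin N × Fin N) (Fin N × Fin N) 𝒜 :=
  Matrix.of fun p r => X (p.2, p.1) (r.2, r.1)

variable {N : ℕ}

lemma swpM_mul (X Y : Matrix (Fin N × Fin N) (Fin N × Fin N) 𝒜) :
    swpM 𝒜 (X * Y) = swpM 𝒜 X * swpM 𝒜 Y := by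
  ext p r
  simp only [swpM, Matrix.mul_apply, Matrix.of_apply]
  exact (Fintype.sum_equiv (Equiv.prodComm _ _) _ _ (fun u => rfl)).symm

lemma swpM_one : swpM 𝒜 (1 : Matrix (Fin N × Fin N) (Fin N × Fin N) 𝒜) = 1 := by
  ext p r
  simp [swpM, Matrix.one_apply, Prod.ext_iff, and_comm]

lemma swpM_kron_left (X : Matrix (Fin N) (Fin N) 𝒜) :
    swpM 𝒜 (X ⊗ₖ (1 : Matrix (Fin N) (Fin N) 𝒜)) = (1 : Matrix (Fin N) (Fin N) 𝒜) ⊗ₖ X := by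
  ext p r
  simp only [swpM, Matrix.of_apply, Matrix.kroneckerMap_apply, Matrix.one_apply,
    mul_ite, ite_mul, mul_one, one_mul, mul_zero, zero_mul]

lemma swpM_kron_right (X : Matrix (Fin N) (Fin N) 𝒜) :
    swpM 𝒜 ((1 : Matrix (Fin N) (Fin N) 𝒜) ⊗ₖ X) = X ⊗ₖ (1 : Matrix (Fin N) (Fin N) 𝒜) := by
  ext p r
  simp only [swpM, Matrix.of_apply, Matrix.kroneckerMap_apply, Matrix.one_apply,
    mul_ite, ite_mul, mul_one, one_mul, mul_zero, zero_mul]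

lemma swpM_RA (q : k) : swpM 𝒜 (RA k 𝒜 q N) = RA21 k 𝒜 q N := rfl

lemma swpM_RA21 (q : k) : swpM 𝒜 (RA21 k 𝒜 q N) = RA k 𝒜 q N := rfl

lemma swpM_RAinv (q : k) : swpM 𝒜 (RAinv k 𝒜 q N) = RAinv21 k 𝒜 q N := rfl

lemma swpM_RAinv21 (q : k) : swpM 𝒜 (RAinv21 k 𝒜 q N) = RAinv k 𝒜 q N := rfl

lemma kron_mul_left_one (X Y : Matrix (Fin N) (Fin N) 𝒜) :
    (X ⊗ₖ (1 : Matrix (Fin N) (Fin N) 𝒜)) * (Y ⊗ₖ 1) = (X * Y) ⊗ₖ 1 := by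
  ext p r
  simp [Matrix.mul_apply, Matrix.one_apply, Fintype.sum_prod_type, mul_ite, ite_mul,
    Finset.sum_ite_eq, Finset.sum_ite_eq', Finset.sum_ite_irrel, Finset.sum_const_zero,
    Finset.sum_mul, Finset.mul_sum]

lemma kron_mul_right_one (X Y : Matrix (Fin N) (Fin N) 𝒜) :
    ((1 : Matrix (Fin N) (Fin N) 𝒜) ⊗ₖ X) * (1 ⊗ₖ Y) = 1 ⊗ₖ (X * Y) := by
  ext p r
  simp [Matrix.mul_apply, Matrix.one_apply, Fintype.sum_prod_type, mul_ite, ite_mul,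
    Finset.sum_ite_eq, Finset.sum_ite_eq', Finset.sum_ite_irrel, Finset.sum_const_zero,
    Finset.sum_mul, Finset.mul_sum]

end SwapMachinery

/-- The defining relations (M1), (M2), (M3) of the quantized edge algebra `𝒟_q(e)`
of the Kronecker quiver with tail dimension `n` and head dimension `m`, for an
`n × m` matrix `A` and an `m × n` matrix `D` over `𝒜`:
(M1) `R[n] A₂ A₁ = A₁ A₂ R[m]₂₁`, (M2) `R[m] D₂ D₁ = D₁ D₂ R[n]₂₁`,
(M3) `D₂ (R[n])⁻¹ A₁ = A₁ R[m] D₂ + τ`. -/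
def EdgeRel (q : k) {n m : ℕ}
    (A : Matrix (Fin n) (Fin m) 𝒜) (D : Matrix (Fin m) (Fin n) 𝒜) : Prop :=
  RA k 𝒜 q n * ((1 : Matrix (Fin n) (Fin n) 𝒜) ⊗ₖ A) * (A ⊗ₖ (1 : Matrix (Fin m) (Fin m) 𝒜))
      = (A ⊗ₖ (1 : Matrix (Fin n) (Fin n) 𝒜)) * ((1 : Matrix (Fin m) (Fin m) 𝒜) ⊗ₖ A)
          * RA21 k 𝒜 q m
    ∧ RA k 𝒜 q m * ((1 : Matrix (Fin m) (Fin m) 𝒜) ⊗ₖ D) * (D ⊗ₖ (1 : Matrix (Fin n) (Fin n) 𝒜))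
      = (D ⊗ₖ (1 : Matrix (Fin m) (Fin m) 𝒜)) * ((1 : Matrix (Fin n) (Fin n) 𝒜) ⊗ₖ D)
          * RA21 k 𝒜 q n
    ∧ ((1 : Matrix (Fin n) (Fin n) 𝒜) ⊗ₖ D) * RAinv k 𝒜 q n * (A ⊗ₖ (1 : Matrix (Fin n) (Fin n) 𝒜))
      = (A ⊗ₖ (1 : Matrix (Fin m) (Fin m) 𝒜)) * RA k 𝒜 q m * ((1 : Matrix (Fin m) (Fin m) 𝒜) ⊗ₖ D)
          + flipA 𝒜 m n

/-- The defining relations (L1), (L2), (L3) of the quantized loop edge algebra `𝒟_q(e)`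
at a vertex of dimension `N`, with `R := R[N]`:
(L1) `R₂₁ A₁ R A₂ = A₂ R₂₁ A₁ R`, (L2) `R₂₁ D₁ R D₂ = D₂ R₂₁ D₁ R`,
(L3) `R₂₁ D₁ R A₂ = A₂ R₂₁ D₁ R₂₁⁻¹`. -/
def LoopRel (q : k) {N : ℕ} (A D : Matrix (Fin N) (Fin N) 𝒜) : Prop :=
  RA21 k 𝒜 q N * (A ⊗ₖ (1 : Matrix (Fin N) (Fin N) 𝒜)) * RA k 𝒜 q N
        * ((1 : Matrix (Fin N) (Fin N) 𝒜) ⊗ₖ A)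
      = ((1 : Matrix (Fin N) (Fin N) 𝒜) ⊗ₖ A) * RA21 k 𝒜 q N
        * (A ⊗ₖ (1 : Matrix (Fin N) (Fin N) 𝒜)) * RA k 𝒜 q N
    ∧ RA21 k 𝒜 q N * (D ⊗ₖ (1 : Matrix (Fin N) (Fin N) 𝒜)) * RA k 𝒜 q N
        * ((1 : Matrix (Fin N) (Fin N) 𝒜) ⊗ₖ D)
      = ((1 : Matrix (Fin N) (Fin N) 𝒜) ⊗ₖ D) * RA21 k 𝒜 q N
        * (D ⊗ₖ (1 : Matrix (Fin N) (Fin N) 𝒜)) * RA k 𝒜 q N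
    ∧ RA21 k 𝒜 q N * (D ⊗ₖ (1 : Matrix (Fin N) (Fin N) 𝒜)) * RA k 𝒜 q N
        * ((1 : Matrix (Fin N) (Fin N) 𝒜) ⊗ₖ A)
      = ((1 : Matrix (Fin N) (Fin N) 𝒜) ⊗ₖ A) * RA21 k 𝒜 q N
        * (D ⊗ₖ (1 : Matrix (Fin N) (Fin N) 𝒜)) * RAinv21 k 𝒜 q N

/-- Let `A, D` be N × N matrices over `𝒜` satisfying the defining
relations (L1), (L2), (L3) of the quantized loop edge algebra `𝒟_q(e)` at a vertex of
dimension `N`, and suppose `A` and `D` are invertible in `Mat_N(𝒜)` (with two-sided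
inverses `Ai`, `Di`).  Then the pair `A' := D`, `D' := D A⁻¹ D⁻¹` again satisfies the
defining relations of the quantized loop edge algebra.  (This is the content of the
q-Fourier transform `ℱ : 𝒟_q(e)° → 𝒟_q(e)°`, `A ↦ D`, `D ↦ D A⁻¹ D⁻¹`, for a loop
edge.) -/
theorem loop_fourier_transform (q : k) (hq : q ≠ 0) {N : ℕ}
    (A D Ai Di : Matrix (Fin N) (Fin N) 𝒜)
    (hrel : LoopRel k 𝒜 q A D)
    (hA₁ : A * Ai = 1) (hA₂ : Ai * A = 1)
    (hD₁ : D * Di = 1) (hD₂ : Di * D = 1) :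
    LoopRel k 𝒜 q D (D * Ai * Di) := by
  obtain ⟨L1, L2, L3⟩ := hrel
  -- notation
  set r : Matrix (Fin N × Fin N) (Fin N × Fin N) 𝒜 := RA k 𝒜 q N with hrdef
  set ri : Matrix (Fin N × Fin N) (Fin N × Fin N) 𝒜 := RAinv k 𝒜 q N with hridef
  set s : Matrix (Fin N × Fin N) (Fin N × Fin N) 𝒜 := RA21 k 𝒜 q N with hsdef
  set si : Matrix (Fin N × Fin N) (Fin N × Fin N) 𝒜 := RAinv21 k 𝒜 q N with hsidef
  have hr1 : r * ri = 1 := by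
    rw [hrdef, hridef, RA, RAinv, ← Matrix.map_mul, Rmat_mul_RmatInv k q hq N,
      Matrix.map_one _ (map_zero _) (map_one _)]
  have hr2 : ri * r = 1 := by
    rw [hrdef, hridef, RA, RAinv, ← Matrix.map_mul, RmatInv_mul_Rmat k q hq N,
      Matrix.map_one _ (map_zero _) (map_one _)]
  have hs1 : s * si = 1 := by
    rw [hsdef, hsidef, ← swpM_RA k 𝒜 q, ← swpM_RAinv k 𝒜 q, ← swpM_mul, hr1, swpM_one]
  have hs2 : si * s = 1 := by
    rw [hsdef, hsidef, ← swpM_RA k 𝒜 q, ← swpM_RAinv k 𝒜 q, ← swpM_mul, hr2, swpM_one]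
  have one1 : ((1 : Matrix (Fin N) (Fin N) 𝒜) ⊗ₖ (1 : Matrix (Fin N) (Fin N) 𝒜))
      = (1 : Matrix (Fin N × Fin N) (Fin N × Fin N) 𝒜) := Matrix.one_kronecker_one
  have ha1 : (A ⊗ₖ (1 : Matrix (Fin N) (Fin N) 𝒜)) * (Ai ⊗ₖ 1) = 1 := by
    rw [kron_mul_left_one, hA₁, one1]
  have ha2 : (Ai ⊗ₖ (1 : Matrix (Fin N) (Fin N) 𝒜)) * (A ⊗ₖ 1) = 1 := by
    rw [kron_mul_left_one, hA₂, one1]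
  have hb1 : ((1 : Matrix (Fin N) (Fin N) 𝒜) ⊗ₖ A) * (1 ⊗ₖ Ai) = 1 := by
    rw [kron_mul_right_one, hA₁, one1]
  have hb2 : ((1 : Matrix (Fin N) (Fin N) 𝒜) ⊗ₖ Ai) * (1 ⊗ₖ A) = 1 := by
    rw [kron_mul_right_one, hA₂, one1]
  have hd1 : (D ⊗ₖ (1 : Matrix (Fin N) (Fin N) 𝒜)) * (Di ⊗ₖ 1) = 1 := by
    rw [kron_mul_left_one, hD₁, one1]
  have hd2 : (Di ⊗ₖ (1 : Matrix (Fin N) (Fin N) 𝒜)) * (D ⊗ₖ 1) = 1 := by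
    rw [kron_mul_left_one, hD₂, one1]
  have he1 : ((1 : Matrix (Fin N) (Fin N) 𝒜) ⊗ₖ D) * (1 ⊗ₖ Di) = 1 := by
    rw [kron_mul_right_one, hD₁, one1]
  have he2 : ((1 : Matrix (Fin N) (Fin N) 𝒜) ⊗ₖ Di) * (1 ⊗ₖ D) = 1 := by
    rw [kron_mul_right_one, hD₂, one1]
  -- the flipped relations
  have F1 := congrArg (swpM 𝒜) L1
  have F2 := congrArg (swpM 𝒜) L2
  have F3 := congrArg (swpM 𝒜) L3
  have swr : swpM 𝒜 r = s := rfl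
  have sws : swpM 𝒜 s = r := rfl
  have swri : swpM 𝒜 ri = si := rfl
  have swsi : swpM 𝒜 si = ri := rfl
  simp only [swpM_mul, swpM_RA, swpM_RA21, swpM_RAinv, swpM_RAinv21,
    swpM_kron_left, swpM_kron_right, swr, sws, swri, swsi] at F1 F2 F3
  -- apply the abstract result
  obtain ⟨out3, out2⟩ :=
    loop_fourier_abstract r ri s si
      (A ⊗ₖ 1) (Ai ⊗ₖ 1) (1 ⊗ₖ A) (1 ⊗ₖ Ai)
      (D ⊗ₖ 1) (Di ⊗ₖ 1) (1 ⊗ₖ D) (1 ⊗ₖ Di)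
      hr1 hr2 hs1 hs2 ha1 ha2 hb1 hb2 hd1 hd2 he1 he2
      (by simpa [mul_assoc] using L1)
      (by simpa [mul_assoc] using L2)
      (by simpa [mul_assoc] using L3)
      (by simpa [mul_assoc] using F1)
      (by simpa [mul_assoc] using F2)
      (by simpa [mul_assoc] using F3)
  have hu1 : ((D * Ai * Di) ⊗ₖ (1 : Matrix (Fin N) (Fin N) 𝒜))
      = (D ⊗ₖ 1) * (Ai ⊗ₖ 1) * (Di ⊗ₖ 1) := by
    rw [kron_mul_left_one, kron_mul_left_one]
  have hu2 : ((1 : Matrix (Fin N) (Fin N) 𝒜) ⊗ₖ (D * Ai * Di))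
      = (1 ⊗ₖ D) * (1 ⊗ₖ Ai) * (1 ⊗ₖ Di) := by
    rw [kron_mul_right_one, kron_mul_right_one]
  refine ⟨L2, ?_, ?_⟩
  · rw [hu1, hu2]
    simp only [mul_assoc]
    exact out2
  · rw [hu1]
    simp only [mul_assoc]
    exact out3
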